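/- Let h : ℝⁿ → ℝⁿ and let F̄ ∈ ℝ^{n×n} be a nonnegative matrix such that |h(c₁) − h(c₂)| ≤ F̄ |c₁ − c₂| entrywise for all c₁, c₂ ∈ ℝⁿ. Let W₁ ∈ ℝ^{n'×n'}, W₂ ∈ ℝ^{n'×n}, W₃ ∈ ℝ^{n×n'} be such that ρ(|W₁| + |W₂| F̄ |W₃|) < 1. Then for every w̄ ∈ ℝⁿ, c ∈ ℝ^{n'}, and m ∈ ((0,∞])^{n'}, there exists a unique x* ∈ ℝ^{n'} satisfying x* = [W₁ x* + W₂ h(W₃ x* + w̄) + c]₀^m. -/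
import Mathlib


open Matrix

/-- Saturation `[x]₀^m = min{max{x,0}, m}` where the upper bound `m ∈ (0,∞]` is an
extended nonnegative real (`m = ⊤` means no upper saturation). -/
noncomputable def clampE (m : ENNReal) (x : ℝ) : ℝ :=
  if m = ⊤ then max x 0 else min (max x 0) m.toReal

/-- Spectral radius of a real matrix: the largest modulus of its complex eigenvalues. -/
noncomputable def specRad {n : ℕ} (A : Matrix (Fin n) (Fin n) ℝ) : ℝ :=
  (spectralRadius ℂ (A.map (Complex.ofReal ·))).toReal

/-- The comparison matrix `|W₁| + |W₂| F̄ |W₃|`, with `|·|` the entrywise absolute value. -/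
noncomputable def gainMat {n n' : ℕ} (W₁ : Matrix (Fin n') (Fin n') ℝ)
    (W₂ : Matrix (Fin n') (Fin n) ℝ) (W₃ : Matrix (Fin n) (Fin n') ℝ)
    (Fbar : Matrix (Fin n) (Fin n) ℝ) : Matrix (Fin n') (Fin n') ℝ :=
  W₁.map (fun a => |a|) + W₂.map (fun a => |a|) * Fbar * W₃.map (fun a => |a|)

/-- The map `T(x) = [W₁ x + W₂ h(W₃ x + w̄) + c]₀^m`. -/
noncomputable def Tmap {n n' : ℕ} (W₁ : Matrix (Fin n') (Fin n') ℝ)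
    (W₂ : Matrix (Fin n') (Fin n) ℝ) (W₃ : Matrix (Fin n) (Fin n') ℝ)
    (h : (Fin n → ℝ) → (Fin n → ℝ)) (wbar : Fin n → ℝ) (c : Fin n' → ℝ)
    (m : Fin n' → ENNReal) (x : Fin n' → ℝ) : Fin n' → ℝ :=
  fun i => clampE (m i) ((W₁.mulVec x + W₂.mulVec (h (W₃.mulVec x + wbar)) + c) i)

section Aux

open Filter Topology Function

attribute [local instance] Matrix.linftyOpNormedAddCommGroup Matrix.linftyOpNormedRing
  Matrix.linftyOpNormedAlgebra

lemma clampE_lip (m : ENNReal) (a b : ℝ) : |clampE m a - clampE m b| ≤ |a - b| := by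
  unfold clampE
  split
  · exact abs_max_sub_max_le_abs a b 0
  · refine le_trans (abs_min_sub_min_le_max _ _ _ _) ?_
    simp only [sub_self, abs_zero]
    exact max_le (abs_max_sub_max_le_abs a b 0) (abs_nonneg _)

lemma mulVec_mono {n n' : ℕ} {A : Matrix (Fin n') (Fin n) ℝ} (hA : ∀ i j, 0 ≤ A i j)
    {u v : Fin n → ℝ} (huv : ∀ j, u j ≤ v j) (i : Fin n') :
    A.mulVec u i ≤ A.mulVec v i := by
  simp only [Matrix.mulVec, dotProduct]
  exact Finset.sum_le_sum fun j _ => mul_le_mul_of_nonneg_left (huv j) (hA i j)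

lemma pow_entry_nonneg {n' : ℕ} {A : Matrix (Fin n') (Fin n') ℝ} (hA : ∀ i j, 0 ≤ A i j)
    (k : ℕ) : ∀ i j, 0 ≤ (A ^ k) i j := by
  induction k with
  | zero => intro i j; simp [Matrix.one_apply]; split <;> norm_num
  | succ k ih =>
    intro i j
    rw [pow_succ, Matrix.mul_apply]
    exact Finset.sum_nonneg fun l _ => mul_nonneg (ih i l) (hA l j)

lemma map_ofReal_pow {n' : ℕ} (A : Matrix (Fin n') (Fin n') ℝ) (k : ℕ) :
    (A.map (Complex.ofReal ·)) ^ k = (A ^ k).map (Complex.ofReal ·) := by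
  induction k with
  | zero => ext i j; simp [Matrix.map_apply, Matrix.one_apply]; split <;> simp
  | succ k ih =>
    rw [pow_succ, pow_succ, ih]
    exact (Matrix.map_mul (f := Complex.ofRealHom)).symm

/-- Key pointwise Lipschitz-type bound for `Tmap`. -/
lemma Tmap_bound {n n' : ℕ}
    (h : (Fin n → ℝ) → (Fin n → ℝ))
    (Fbar : Matrix (Fin n) (Fin n) ℝ) (hFnn : ∀ i j, 0 ≤ Fbar i j)
    (hFlip : ∀ (c₁ c₂ : Fin n → ℝ) (i : Fin n),
      |h c₁ i - h c₂ i| ≤ Fbar.mulVec (fun j => |c₁ j - c₂ j|) i)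
    (W₁ : Matrix (Fin n') (Fin n') ℝ) (W₂ : Matrix (Fin n') (Fin n) ℝ)
    (W₃ : Matrix (Fin n) (Fin n') ℝ)
    (wbar : Fin n → ℝ) (c : Fin n' → ℝ) (m : Fin n' → ENNReal)
    (x y : Fin n' → ℝ) (i : Fin n') :
    |Tmap W₁ W₂ W₃ h wbar c m x i - Tmap W₁ W₂ W₃ h wbar c m y i| ≤
      (gainMat W₁ W₂ W₃ Fbar).mulVec (fun j => |x j - y j|) i := by
  set d : Fin n' → ℝ := fun j => |x j - y j| with hd
  set a : Fin n → ℝ := W₃.mulVec x + wbar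
  set b : Fin n → ℝ := W₃.mulVec y + wbar
  have h1 : |Tmap W₁ W₂ W₃ h wbar c m x i - Tmap W₁ W₂ W₃ h wbar c m y i| ≤
      |(W₁.mulVec x + W₂.mulVec (h a) + c) i - (W₁.mulVec y + W₂.mulVec (h b) + c) i| :=
    clampE_lip _ _ _
  have h2 : (W₁.mulVec x + W₂.mulVec (h a) + c) i - (W₁.mulVec y + W₂.mulVec (h b) + c) i
      = (W₁.mulVec x i - W₁.mulVec y i) + (W₂.mulVec (h a) i - W₂.mulVec (h b) i) := by
    simp only [Pi.add_apply]; ring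
  have hab : ∀ l, |a l - b l| ≤ (W₃.map (fun t => |t|)).mulVec d l := by
    intro l
    have : a l - b l = ∑ p, W₃ l p * (x p - y p) := by
      simp [a, b, Matrix.mulVec, dotProduct, ← Finset.sum_sub_distrib, mul_sub]
    rw [this]
    refine le_trans (Finset.abs_sum_le_sum_abs _ _) ?_
    refine Finset.sum_le_sum fun p _ => ?_
    rw [abs_mul]
    exact le_of_eq rfl
  have hh : ∀ l, |h a l - h b l| ≤ (Fbar * W₃.map (fun t => |t|)).mulVec d l := by
    intro l
    refine le_trans (hFlip a b l) ?_
    rw [← Matrix.mulVec_mulVec]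
    exact mulVec_mono hFnn hab l
  have hW1 : |W₁.mulVec x i - W₁.mulVec y i| ≤ (W₁.map (fun t => |t|)).mulVec d i := by
    have : W₁.mulVec x i - W₁.mulVec y i = ∑ p, W₁ i p * (x p - y p) := by
      simp [Matrix.mulVec, dotProduct, ← Finset.sum_sub_distrib, mul_sub]
    rw [this]
    refine le_trans (Finset.abs_sum_le_sum_abs _ _) ?_
    refine Finset.sum_le_sum fun p _ => ?_
    rw [abs_mul]
    exact le_of_eq rfl
  have hW2 : |W₂.mulVec (h a) i - W₂.mulVec (h b) i| ≤
      (W₂.map (fun t => |t|) * (Fbar * W₃.map (fun t => |t|))).mulVec d i := by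
    have e : W₂.mulVec (h a) i - W₂.mulVec (h b) i = ∑ p, W₂ i p * (h a p - h b p) := by
      simp [Matrix.mulVec, dotProduct, ← Finset.sum_sub_distrib, mul_sub]
    rw [e, ← Matrix.mulVec_mulVec]
    refine le_trans (Finset.abs_sum_le_sum_abs _ _) ?_
    refine Finset.sum_le_sum fun p _ => ?_
    rw [abs_mul]
    exact mul_le_mul_of_nonneg_left (hh p) (abs_nonneg _)
  calc |Tmap W₁ W₂ W₃ h wbar c m x i - Tmap W₁ W₂ W₃ h wbar c m y i|
      ≤ |(W₁.mulVec x i - W₁.mulVec y i) + (W₂.mulVec (h a) i - W₂.mulVec (h b) i)| := by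
        rw [← h2]; exact h1
    _ ≤ |W₁.mulVec x i - W₁.mulVec y i| + |W₂.mulVec (h a) i - W₂.mulVec (h b) i| := abs_add_le _ _
    _ ≤ (W₁.map (fun t => |t|)).mulVec d i
        + (W₂.map (fun t => |t|) * (Fbar * W₃.map (fun t => |t|))).mulVec d i :=
        add_le_add hW1 hW2
    _ = (gainMat W₁ W₂ W₃ Fbar).mulVec d i := by
        rw [gainMat, Matrix.mul_assoc, Matrix.add_mulVec]
        rfl

lemma exists_pow_rowsum_lt {n' : ℕ} (A : Matrix (Fin n') (Fin n') ℝ)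
    (hs : specRad A < 1) :
    ∃ (N : ℕ) (K : NNReal), K < 1 ∧ ∀ i, ∑ j, |(A ^ N) i j| ≤ (K : ℝ) := by
  rcases Nat.eq_zero_or_pos n' with rfl | hpos
  · exact ⟨0, 0, by norm_num, fun i => i.elim0⟩
  haveI : Nonempty (Fin n') := ⟨⟨0, hpos⟩⟩
  set B : Matrix (Fin n') (Fin n') ℂ := A.map (Complex.ofReal ·) with hB
  have hfin : spectralRadius ℂ B ≠ ⊤ :=
    ne_top_of_le_ne_top ENNReal.coe_ne_top (spectrum.spectralRadius_le_nnnorm B)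
  have hlt : spectralRadius ℂ B < 1 := by
    rcases lt_or_ge (spectralRadius ℂ B) 1 with h | h
    · exact h
    · exfalso
      have : (1 : ℝ) ≤ (spectralRadius ℂ B).toReal := by
        rw [← ENNReal.toReal_one]
        exact ENNReal.toReal_mono hfin h
      exact absurd hs (not_lt.mpr this)
  have htend := spectrum.pow_nnnorm_pow_one_div_tendsto_nhds_spectralRadius B
  have hev := htend.eventually_lt_const hlt
  obtain ⟨N, hN1, hNlt⟩ : ∃ N : ℕ, 1 ≤ N ∧ (‖B ^ N‖₊ : ENNReal) ^ (1 / N : ℝ) < 1 := by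
    rcases (hev.and (eventually_ge_atTop 1)).exists with ⟨N, h1, h2⟩
    exact ⟨N, h2, h1⟩
  have hKlt : ‖B ^ N‖₊ < 1 := by
    by_contra hc
    push_neg at hc
    have : (1 : ENNReal) ≤ (‖B ^ N‖₊ : ENNReal) ^ (1 / N : ℝ) := by
      calc (1 : ENNReal) = (1 : ENNReal) ^ (1 / N : ℝ) := (ENNReal.one_rpow _).symm
        _ ≤ (‖B ^ N‖₊ : ENNReal) ^ (1 / N : ℝ) := by
            refine ENNReal.rpow_le_rpow ?_ (by positivity)
            exact_mod_cast hc
    exact absurd hNlt (not_lt.mpr this)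
  refine ⟨N, ‖B ^ N‖₊, hKlt, fun i => ?_⟩
  have h1 : ∑ j, ‖(B ^ N) i j‖₊ ≤ ‖B ^ N‖₊ := by
    rw [Matrix.linfty_opNNNorm_def]
    exact Finset.le_sup (f := fun i => ∑ j, ‖(B ^ N) i j‖₊) (Finset.mem_univ i)
  have h2 : ∀ j, ‖(B ^ N) i j‖ = |(A ^ N) i j| := by
    intro j
    rw [hB, map_ofReal_pow]
    simp [Matrix.map_apply, Complex.norm_real]
  calc ∑ j, |(A ^ N) i j| = ∑ j, ‖(B ^ N) i j‖ := by simp [h2]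
    _ ≤ (‖B ^ N‖₊ : ℝ) := by
        have := NNReal.coe_le_coe.mpr h1
        simpa using this

end Aux

open Function in
/-- If `|h(c₁) − h(c₂)| ≤ F̄|c₁ − c₂|` entrywise (`F̄ ≥ 0`) and
`ρ(|W₁| + |W₂| F̄ |W₃|) < 1`, then for every `w̄`, `c` and `m ∈ (0,∞]^{n'}` there is a unique
fixed point `x* = [W₁ x* + W₂ h(W₃ x* + w̄) + c]₀^m`. -/
theorem clamp_fixed_point_exists_unique
    {n n' : ℕ}
    (h : (Fin n → ℝ) → (Fin n → ℝ))
    (Fbar : Matrix (Fin n) (Fin n) ℝ) (hFnn : ∀ i j, 0 ≤ Fbar i j)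
    (hFlip : ∀ (c₁ c₂ : Fin n → ℝ) (i : Fin n),
      |h c₁ i - h c₂ i| ≤ Fbar.mulVec (fun j => |c₁ j - c₂ j|) i)
    (W₁ : Matrix (Fin n') (Fin n') ℝ) (W₂ : Matrix (Fin n') (Fin n) ℝ)
    (W₃ : Matrix (Fin n) (Fin n') ℝ)
    (hspec : specRad (gainMat W₁ W₂ W₃ Fbar) < 1) :
    ∀ (wbar : Fin n → ℝ) (c : Fin n' → ℝ) (m : Fin n' → ENNReal), (∀ i, 0 < m i) →
      ∃! xstar : Fin n' → ℝ, xstar = Tmap W₁ W₂ W₃ h wbar c m xstar := by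
  intro wbar c m _
  set T : (Fin n' → ℝ) → (Fin n' → ℝ) := Tmap W₁ W₂ W₃ h wbar c m with hT
  set G : Matrix (Fin n') (Fin n') ℝ := gainMat W₁ W₂ W₃ Fbar with hG
  have hGnn : ∀ i j, 0 ≤ G i j := by
    intro i j
    rw [hG, gainMat]
    simp only [Matrix.add_apply, Matrix.map_apply, Matrix.mul_apply]
    refine add_nonneg (abs_nonneg _) (Finset.sum_nonneg fun l _ => ?_)
    refine mul_nonneg (Finset.sum_nonneg fun p _ => ?_) (abs_nonneg _)
    exact mul_nonneg (abs_nonneg _) (hFnn p l)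
  have hTlip : ∀ x y i, |T x i - T y i| ≤ G.mulVec (fun j => |x j - y j|) i :=
    fun x y i => Tmap_bound h Fbar hFnn hFlip W₁ W₂ W₃ wbar c m x y i
  have hiter : ∀ (k : ℕ) (x y : Fin n' → ℝ) (i : Fin n'),
      |T^[k] x i - T^[k] y i| ≤ (G ^ k).mulVec (fun j => |x j - y j|) i := by
    intro k
    induction k with
    | zero => intro x y i; simp [Matrix.one_mulVec]
    | succ k ih =>
      intro x y i
      rw [iterate_succ_apply, iterate_succ_apply]
      calc |T^[k] (T x) i - T^[k] (T y) i|
          ≤ (G ^ k).mulVec (fun j => |T x j - T y j|) i := ih (T x) (T y) i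
        _ ≤ (G ^ k).mulVec (G.mulVec (fun j => |x j - y j|)) i :=
            mulVec_mono (pow_entry_nonneg hGnn k) (fun j => hTlip x y j) i
        _ = (G ^ (k + 1)).mulVec (fun j => |x j - y j|) i := by
            rw [Matrix.mulVec_mulVec, ← pow_succ]
  obtain ⟨N, K, hK1, hKrow⟩ := exists_pow_rowsum_lt G hspec
  have hC : ContractingWith K (T^[N]) := by
    refine ⟨hK1, LipschitzWith.of_dist_le_mul fun x y => ?_⟩
    rw [dist_pi_le_iff (mul_nonneg K.coe_nonneg dist_nonneg)]
    intro i
    rw [Real.dist_eq]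
    have hdj : ∀ j, |x j - y j| ≤ dist x y := by
      intro j
      rw [← Real.dist_eq]
      exact dist_le_pi_dist x y j
    calc |T^[N] x i - T^[N] y i|
        ≤ (G ^ N).mulVec (fun j => |x j - y j|) i := hiter N x y i
      _ = ∑ j, (G ^ N) i j * |x j - y j| := rfl
      _ ≤ ∑ j, (G ^ N) i j * dist x y :=
          Finset.sum_le_sum fun j _ =>
            mul_le_mul_of_nonneg_left (hdj j) (pow_entry_nonneg hGnn N i j)
      _ = (∑ j, (G ^ N) i j) * dist x y := (Finset.sum_mul _ _ _).symm
      _ ≤ (K : ℝ) * dist x y := by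
          refine mul_le_mul_of_nonneg_right ?_ dist_nonneg
          refine le_trans (le_of_eq ?_) (hKrow i)
          exact Finset.sum_congr rfl fun j _ => (abs_of_nonneg (pow_entry_nonneg hGnn N i j)).symm
  refine ⟨hC.fixedPoint (T^[N]), ?_, ?_⟩
  · exact (hC.isFixedPt_fixedPoint_iterate).eq.symm
  · intro y hy
    have hyfix : IsFixedPt T y := hy.symm
    exact hC.fixedPoint_unique' (hyfix.iterate N) hC.fixedPoint_isFixedPt
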